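/- arXiv:0903.4987 — 2 statements merged into one kernel-verified Lean document; each statement's English description precedes it below -/
import Mathlib

section
/- Let φ be an 𝔖∞-central state on G = Γ≀𝔖∞ with GNS triple (π, H, ξ). For k = 1, 2 let φ_k be a positive normal functional on π(G)″; concretely, assume there are sequences (x_n^{(k)})_{n∈ℕ} in H with Σ_n ‖x_n^{(k)}‖² < ∞ such that φ_k(a) = Σ_n ⟨a x_n^{(k)}, x_n^{(k)}⟩ for every a ∈ π(G)″. Assume: (i) φ_k(π(s)·a) = φ_k(a·π(s)) for every s ∈ 𝔖∞ and every a ∈ π(G)″ (k = 1, 2); and (ii) φ₁(c) = φ₂(c) for every c in the center π(G)″ ∩ π(G)′. Then φ₁(π(g)) = φ₂(π(g)) for every g ∈ G. -/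
open scoped Classical ComplexOrder
open Filter Topology

noncomputable section

namespace DN

local notation "⟪" x ", " y "⟫" => @inner ℂ _ _ x y

/-- The group `𝔖∞` of finitely supported permutations of `ℕ`. -/
def SInf : Subgroup (Equiv.Perm ℕ) where
  carrier := {s | {i | s i ≠ i}.Finite}
  one_mem' := by simp
  mul_mem' := by
    intro s t hs ht
    refine Set.Finite.subset (hs.union ht) fun i hi => ?_
    simp only [Set.mem_setOf_eq, Set.mem_union, Equiv.Perm.mul_apply] at hi ⊢
    by_contra h
    push_neg at h
    rw [h.2, h.1] at hi
    exact hi rfl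
  inv_mem' := by
    intro s hs
    refine Set.Finite.subset hs fun i hi => ?_
    simp only [Set.mem_setOf_eq] at hi ⊢
    intro h
    exact hi (Equiv.Perm.inv_eq_iff_eq.mpr h.symm)

theorem mem_SInf (s : Equiv.Perm ℕ) : s ∈ SInf ↔ {i | s i ≠ i}.Finite := Iff.rfl

/-- The group `Γ^∞_e` of finitely supported sequences in `Γ`. -/
def GammaE (Γ : Type*) [Group Γ] : Subgroup (ℕ → Γ) where
  carrier := {γ | {i | γ i ≠ 1}.Finite}
  one_mem' := by simp
  mul_mem' := by
    intro f g hf hg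
    refine Set.Finite.subset (hf.union hg) fun i hi => ?_
    simp only [Set.mem_setOf_eq, Set.mem_union, Pi.mul_apply] at hi ⊢
    by_contra h
    push_neg at h
    rw [h.1, h.2] at hi
    exact hi (one_mul 1)
  inv_mem' := by
    intro f hf
    refine Set.Finite.subset hf fun i hi => ?_
    simp only [Set.mem_setOf_eq, Pi.inv_apply, ne_eq, inv_eq_one] at hi ⊢
    exact hi

theorem mem_GammaE {Γ : Type*} [Group Γ] (γ : ℕ → Γ) :
    γ ∈ GammaE Γ ↔ {i | γ i ≠ 1}.Finite := Iff.rfl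

/-- The permutation action of `Equiv.Perm ℕ` on `ℕ → Γ`. -/
def permMulAut (Γ : Type*) [Group Γ] (s : Equiv.Perm ℕ) : MulAut (ℕ → Γ) where
  toFun γ := γ ∘ s.symm
  invFun γ := γ ∘ s
  left_inv γ := by funext i; simp [Function.comp]
  right_inv γ := by funext i; simp [Function.comp]
  map_mul' γ δ := rfl

def permAction (Γ : Type*) [Group Γ] : Equiv.Perm ℕ →* MulAut (ℕ → Γ) where
  toFun := permMulAut Γ
  map_one' := by ext γ i; rfl
  map_mul' s t := by ext γ i; rfl

/-- The (big) wreath product `(ℕ → Γ) ⋊ Perm ℕ`. -/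
abbrev W (Γ : Type*) [Group Γ] := (ℕ → Γ) ⋊[permAction Γ] Equiv.Perm ℕ

/-- The wreath product `G = Γ ≀ 𝔖∞`, as the subgroup of `W Γ` of finitely
supported elements. -/
def WG (Γ : Type*) [Group Γ] : Subgroup (W Γ) where
  carrier := {g | {i | g.right i ≠ i}.Finite ∧ {i | g.left i ≠ 1}.Finite}
  one_mem' := by
    constructor
    · convert Set.finite_empty using 1
      ext i; simp
    · convert Set.finite_empty using 1
      ext i; simp
  mul_mem' := by
    rintro a b ⟨ha1, ha2⟩ ⟨hb1, hb2⟩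
    constructor
    · refine Set.Finite.subset (ha1.union hb1) fun i hi => ?_
      simp only [Set.mem_setOf_eq, Set.mem_union, SemidirectProduct.mul_right,
        Equiv.Perm.mul_apply] at hi ⊢
      by_contra h
      push_neg at h
      rw [h.2, h.1] at hi
      exact hi rfl
    · refine Set.Finite.subset (ha2.union (hb2.image a.right)) fun i hi => ?_
      simp only [Set.mem_setOf_eq, SemidirectProduct.mul_left, Pi.mul_apply] at hi
      by_contra h
      simp only [Set.mem_union, Set.mem_setOf_eq, Set.mem_image, not_or, not_exists,
        not_and, not_not] at h
      obtain ⟨h1, h2⟩ := h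
      apply hi
      have hb : b.left (a.right⁻¹ i) = 1 := by
        by_contra hc
        exact h2 (a.right⁻¹ i) hc (by simp)
      have hrfl : (permAction Γ a.right b.left) i = b.left (a.right⁻¹ i) := rfl
      rw [h1, one_mul, hrfl, hb]
  inv_mem' := by
    rintro a ⟨ha1, ha2⟩
    constructor
    · refine Set.Finite.subset ha1 fun i hi => ?_
      simp only [Set.mem_setOf_eq, SemidirectProduct.inv_right] at hi ⊢
      intro h
      exact hi (Equiv.Perm.inv_eq_iff_eq.mpr h.symm)
    · refine Set.Finite.subset (Set.Finite.preimage (a.right.injective.injOn) ha2)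
        fun i hi => ?_
      simp only [Set.mem_setOf_eq] at hi
      simp only [Set.mem_preimage, Set.mem_setOf_eq]
      intro h
      apply hi
      have hrfl : (a⁻¹).left i = (a.left (a.right i))⁻¹ := rfl
      rw [hrfl, h, inv_one]

theorem mem_WG {Γ : Type*} [Group Γ] (g : W Γ) :
    g ∈ WG Γ ↔ {i | g.right i ≠ i}.Finite ∧ {i | g.left i ≠ 1}.Finite := Iff.rfl

/-- The canonical copy of `𝔖∞` inside `Γ ≀ 𝔖∞`. -/
def permW {Γ : Type*} [Group Γ] (s : SInf) : WG Γ :=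
  ⟨SemidirectProduct.inr s.1, by
    rw [mem_WG]
    constructor
    · have h : (SemidirectProduct.inr s.1 : W Γ).right = s.1 := SemidirectProduct.right_inr _
      rw [h]
      exact s.2
    · convert Set.finite_empty using 1
      ext i; simp⟩

/-- The canonical copy of `Γ^∞_e` inside `Γ ≀ 𝔖∞`. -/
def seqW {Γ : Type*} [Group Γ] (γ : GammaE Γ) : WG Γ :=
  ⟨SemidirectProduct.inl γ.1, by
    rw [mem_WG]
    constructor
    · convert Set.finite_empty using 1
      ext i; simp
    · have h : (SemidirectProduct.inl γ.1 : W Γ).left = γ.1 := SemidirectProduct.left_inl _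
      rw [h]
      exact γ.2⟩

/-- The support of an element of `Γ ≀ 𝔖∞`. -/
def supp {Γ : Type*} [Group Γ] (g : WG Γ) : Set ℕ :=
  {i | (g : W Γ).right i ≠ i ∨ (g : W Γ).left i ≠ 1}

/-- Positive definiteness of a function on a group. -/
def IsPosDef {G : Type*} [Group G] (φ : G → ℂ) : Prop :=
  ∀ (m : ℕ) (g : Fin m → G) (c : Fin m → ℂ),
    0 ≤ ∑ i, ∑ j, c i * (starRingEnd ℂ) (c j) * φ ((g j)⁻¹ * g i)

/-- A state on a group: normalized positive definite function. -/
def IsState {G : Type*} [Group G] (φ : G → ℂ) : Prop := φ 1 = 1 ∧ IsPosDef φ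

/-- `𝔖∞`-centrality of a function on `Γ ≀ 𝔖∞`. -/
def IsSCentral {Γ : Type*} [Group Γ] (φ : WG Γ → ℂ) : Prop :=
  ∀ (s : SInf) (g : WG Γ), φ (permW s * g * (permW s)⁻¹) = φ g

/-- The commutant of a set of bounded operators. -/
def commutant {H : Type*} [NormedAddCommGroup H] [InnerProductSpace ℂ H]
    (S : Set (H →L[ℂ] H)) : Set (H →L[ℂ] H) := {T | ∀ A ∈ S, T * A = A * T}

variable {Γ : Type*} [Group Γ]
variable {H : Type*} [NormedAddCommGroup H] [InnerProductSpace ℂ H] [CompleteSpace H]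

/-- The image set `π(G)` of a representation. -/
def repSet (π : WG Γ →* (H →L[ℂ] H)) : Set (H →L[ℂ] H) := Set.range fun g : WG Γ => π g

/-- The von Neumann algebra `π(G)''` (double commutant). -/
def vN (π : WG Γ →* (H →L[ℂ] H)) : Set (H →L[ℂ] H) := commutant (commutant (repSet π))

/-- The representation is factorial: the center `π(G)' ∩ π(G)''` consists of scalars. -/
def IsFactorial (π : WG Γ →* (H →L[ℂ] H)) : Prop :=
  ∀ T ∈ commutant (repSet π) ∩ vN π, ∃ c : ℂ, T = c • (1 : H →L[ℂ] H)

/-- `(π, H, ξ)` is a GNS triple for `φ`. -/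
structure IsGNS (φ : WG Γ → ℂ) (π : WG Γ →* (H →L[ℂ] H)) (ξ : H) : Prop where
  unitary : ∀ g, π g ∈ unitary (H →L[ℂ] H)
  norm_one : ‖ξ‖ = 1
  cyclic : Dense ((Submodule.span ℂ (Set.range fun g : WG Γ => π g ξ) : Submodule ℂ H) : Set H)
  inner_eq : ∀ g, φ g = ⟪ξ, π g ξ⟫

theorem swap_mem_SInf (a b : ℕ) : Equiv.swap a b ∈ SInf := by
  rw [mem_SInf]
  refine Set.Finite.subset ((Set.finite_singleton a).insert b) fun i hi => ?_
  simp only [Set.mem_setOf_eq] at hi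
  simp only [Set.mem_insert_iff, Set.mem_singleton_iff]
  by_contra h
  push_neg at h
  exact hi (Equiv.swap_apply_of_ne_of_ne h.2 h.1)

/-- The transposition `(a b)` as an element of `Γ ≀ 𝔖∞`. -/
def swapW {Γ : Type*} [Group Γ] (a b : ℕ) : WG Γ := permW ⟨Equiv.swap a b, swap_mem_SInf a b⟩

def omegaFun (n i : ℕ) : ℕ := if i < n then i + n else if i < 2 * n then i - n else i

theorem omegaFun_invol (n i : ℕ) : omegaFun n (omegaFun n i) = i := by
  unfold omegaFun
  split_ifs <;> first | contradiction | omega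

/-- Olshanski's permutation `ω_n`. -/
def omegaPerm (n : ℕ) : Equiv.Perm ℕ :=
  ⟨omegaFun n, omegaFun n, omegaFun_invol n, omegaFun_invol n⟩

theorem omegaPerm_mem (n : ℕ) : omegaPerm n ∈ SInf := by
  rw [mem_SInf]
  refine Set.Finite.subset (Set.finite_Iio (2 * n)) fun i hi => ?_
  simp only [Set.mem_setOf_eq] at hi
  simp only [Set.mem_Iio]
  by_contra h
  push_neg at h
  apply hi
  show omegaFun n i = i
  unfold omegaFun
  split_ifs <;> first | contradiction | omega

/-- `ω_n` as an element of `Γ ≀ 𝔖∞`. -/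
def omegaW {Γ : Type*} [Group Γ] (n : ℕ) : WG Γ := permW ⟨omegaPerm n, omegaPerm_mem n⟩

def sigmaFun (n i : ℕ) : ℕ := if i + 1 < n then i + 1 else if i + 1 = n then 0 else i

def sigmaInvFun (n i : ℕ) : ℕ := if i < n then (if i = 0 then n - 1 else i - 1) else i

theorem sigma_left_inv (n i : ℕ) : sigmaInvFun n (sigmaFun n i) = i := by
  unfold sigmaFun sigmaInvFun
  split_ifs <;> first | contradiction | omega

theorem sigma_right_inv (n i : ℕ) : sigmaFun n (sigmaInvFun n i) = i := by
  unfold sigmaFun sigmaInvFun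
  split_ifs <;> first | contradiction | omega

/-- The cycle `σ_n = (0 1 2 ... n-1)`. -/
def sigmaPerm (n : ℕ) : Equiv.Perm ℕ :=
  ⟨sigmaFun n, sigmaInvFun n, sigma_left_inv n, sigma_right_inv n⟩

theorem sigmaPerm_mem (n : ℕ) : sigmaPerm n ∈ SInf := by
  rw [mem_SInf]
  refine Set.Finite.subset (Set.finite_Iio n) fun i hi => ?_
  simp only [Set.mem_setOf_eq] at hi
  simp only [Set.mem_Iio]
  by_contra h
  push_neg at h
  apply hi
  show sigmaFun n i = i
  unfold sigmaFun
  split_ifs <;> first | contradiction | omega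

/-- The cycle of `s` through the point `i` (the paper's `s_p` for the orbit `p` of `i`). -/
def cycleAt (s : Equiv.Perm ℕ) (i : ℕ) : Equiv.Perm ℕ where
  toFun j := if s.SameCycle i j then s j else j
  invFun j := if s.SameCycle i j then s⁻¹ j else j
  left_inv j := by
    by_cases h : s.SameCycle i j
    · have h2 : s.SameCycle i (s j) := Equiv.Perm.sameCycle_apply_right.mpr h
      simp [h, h2]
    · simp [h]
  right_inv j := by
    by_cases h : s.SameCycle i j
    · have h2 : s.SameCycle i (s⁻¹ j) := Equiv.Perm.sameCycle_symm_apply_right.mpr h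
      simp [h, h2]
    · simp [h]

theorem cycleAt_mem {s : Equiv.Perm ℕ} (hs : s ∈ SInf) (i : ℕ) : cycleAt s i ∈ SInf := by
  rw [mem_SInf] at hs ⊢
  refine Set.Finite.subset hs fun j hj => ?_
  simp only [Set.mem_setOf_eq] at hj ⊢
  intro h
  apply hj
  show (if s.SameCycle i j then s j else j) = j
  split_ifs with hc
  · exact h
  · rfl

/-- The generalized cycle of `g = sγ` corresponding to the orbit of `i` under `s`. -/
def genCycle {Γ : Type*} [Group Γ] (g : WG Γ) (i : ℕ) : WG Γ :=
  permW ⟨cycleAt (g : W Γ).right i, cycleAt_mem g.2.1 i⟩ *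
  seqW ⟨fun k => if ((g : W Γ).right).SameCycle i k then (g : W Γ).left ((g : W Γ).right k)
      else 1, by
    rw [mem_GammaE]
    refine Set.Finite.subset (Set.Finite.preimage ((g : W Γ).right.injective.injOn) g.2.2)
      fun k hk => ?_
    simp only [Set.mem_setOf_eq] at hk
    simp only [Set.mem_preimage, Set.mem_setOf_eq]
    by_cases hsc : ((g : W Γ).right).SameCycle i k
    · rw [if_pos hsc] at hk; exact hk
    · rw [if_neg hsc] at hk; exact absurd rfl hk⟩

/-- The von Neumann algebra `𝔄_j` generated by `O_j` and the `π(γ)` with `γ` supported at `j`. -/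
def Aj (π : WG Γ →* (H →L[ℂ] H)) (O : H →L[ℂ] H) (j : ℕ) : Set (H →L[ℂ] H) :=
  commutant (commutant
    ({O} ∪ {T | ∃ γ : GammaE Γ, (∀ i, i ≠ j → (γ : ℕ → Γ) i = 1) ∧ T = π (seqW γ)}))

section GroupComb
variable {Γ : Type*} [Group Γ]

theorem Wmul_left (a b : W Γ) (i : ℕ) :
    (a * b).left i = a.left i * b.left (a.right⁻¹ i) := rfl

theorem Wmul_right (a b : W Γ) : (a * b).right = a.right * b.right := rfl

theorem perm_fix_inv {e : Equiv.Perm ℕ} {i : ℕ} (h : e i = i) : e⁻¹ i = i := by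
  conv_lhs => rw [← h]
  exact Equiv.symm_apply_apply e i

/-- fundamental triviality transfer -/
theorem fix_lt_of_fix_ge {e : Equiv.Perm ℕ} {N : ℕ} (h : ∀ i, N ≤ i → e i = i) :
    ∀ i, i < N → e i < N := by
  intro i hi
  by_contra hc
  push_neg at hc
  have := h _ hc
  have := e.injective this
  omega

theorem ge_of_fix_lt {e : Equiv.Perm ℕ} {N : ℕ} (h : ∀ i, i < N → e i = i) :
    ∀ i, N ≤ i → N ≤ e i := by
  intro i hi
  by_contra hc
  push_neg at hc
  have := h _ hc
  have := e.injective this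
  omega
end GroupComb
section GroupComb2
variable {Γ : Type*} [Group Γ]

/-- Elements with disjoint supports commute. -/
theorem disj_comm (g h : WG Γ) (M : ℕ)
    (hg : ∀ i, i < M → (g : W Γ).right i = i ∧ (g : W Γ).left i = 1)
    (hh : ∀ i, M ≤ i → (h : W Γ).right i = i ∧ (h : W Γ).left i = 1) :
    g * h = h * g := by
  have hgr : ∀ i, i < M → (g : W Γ).right i = i := fun i hi => (hg i hi).1
  have hhr : ∀ i, M ≤ i → (h : W Γ).right i = i := fun i hi => (hh i hi).1
  ext1
  rw [Subgroup.coe_mul, Subgroup.coe_mul]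
  apply SemidirectProduct.ext
  · funext i
    show ((g:W Γ) * (h:W Γ)).left i = ((h:W Γ) * (g:W Γ)).left i
    rw [Wmul_left, Wmul_left]
    by_cases hi : i < M
    · rw [(hg i hi).2, perm_fix_inv (hgr i hi), one_mul, (hg _ ?_).2, mul_one]
      have : (h : W Γ).right⁻¹ i < M := by
        by_contra hc
        push_neg at hc
        have := hhr _ hc
        rw [(show ∀ (e : Equiv.Perm ℕ) (x : ℕ), e (e⁻¹ x) = x from fun e x => e.apply_symm_apply x)] at this
        omega
      exact this
    · push_neg at hi
      rw [(hh i hi).2, perm_fix_inv (hhr i hi), one_mul, (hh _ ?_).2, mul_one]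
      have : M ≤ (g : W Γ).right⁻¹ i := by
        by_contra hc
        push_neg at hc
        have := hgr _ hc
        rw [(show ∀ (e : Equiv.Perm ℕ) (x : ℕ), e (e⁻¹ x) = x from fun e x => e.apply_symm_apply x)] at this
        omega
      exact this
  · show ((g:W Γ) * (h:W Γ)).right = ((h:W Γ) * (g:W Γ)).right
    rw [Wmul_right, Wmul_right]
    have : (g : W Γ).right.Disjoint (h : W Γ).right := by
      intro i
      by_cases hi : i < M
      · exact Or.inl (hgr i hi)
      · exact Or.inr (hhr i (by omega))
    exact this.commute

theorem conjW_coe (s : SInf) (g : WG Γ) :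
    ((permW s * g * (permW s)⁻¹ : WG Γ) : W Γ)
      = SemidirectProduct.inr s.1 * (g : W Γ) * (SemidirectProduct.inr s.1)⁻¹ := by
  rw [Subgroup.coe_mul, Subgroup.coe_mul, Subgroup.coe_inv]
  rfl

theorem conjW_right (s : SInf) (g : WG Γ) :
    ((permW s * g * (permW s)⁻¹ : WG Γ) : W Γ).right = s.1 * (g : W Γ).right * s.1⁻¹ := by
  rw [conjW_coe]; simp

theorem conjW_left (s : SInf) (g : WG Γ) (i : ℕ) :
    ((permW s * g * (permW s)⁻¹ : WG Γ) : W Γ).left i = (g : W Γ).left (s.1⁻¹ i) := by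
  rw [conjW_coe]
  rw [Wmul_left, Wmul_left]
  simp

end GroupComb2
section GroupComb3
variable {Γ : Type*} [Group Γ]

theorem permW_mul (s t : SInf) : (permW (s * t) : WG Γ) = permW s * permW t := by
  ext1
  rw [Subgroup.coe_mul]
  show SemidirectProduct.inr (s.1 * t.1) = _
  rw [map_mul]
  rfl

theorem permW_inv (s : SInf) : (permW s⁻¹ : WG Γ) = (permW s)⁻¹ := by
  ext1
  rw [Subgroup.coe_inv]
  show SemidirectProduct.inr (s.1⁻¹) = _
  rw [map_inv]
  rfl

/-- Conjugation by a permutation fixing `[0,N)` fixes elements supported in `[0,N)`. -/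
theorem conj_fix (s : SInf) (g : WG Γ) (N : ℕ)
    (hs : ∀ i, i < N → s.1 i = i)
    (hg : ∀ i, N ≤ i → (g : W Γ).right i = i ∧ (g : W Γ).left i = 1) :
    permW s * g * (permW s)⁻¹ = g := by
  have hsinv : ∀ i, i < N → s.1⁻¹ i = i := fun i hi => perm_fix_inv (hs i hi)
  have hsinv_ge : ∀ i, N ≤ i → N ≤ s.1⁻¹ i := ge_of_fix_lt hsinv
  ext1
  apply SemidirectProduct.ext
  · funext i
    show ((permW s * g * (permW s)⁻¹ : WG Γ) : W Γ).left i = (g : W Γ).left i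
    rw [conjW_left]
    by_cases hi : i < N
    · rw [hsinv i hi]
    · push_neg at hi
      rw [(hg _ (hsinv_ge i hi)).2, (hg i hi).2]
  · show ((permW s * g * (permW s)⁻¹ : WG Γ) : W Γ).right = (g : W Γ).right
    rw [conjW_right]
    apply Equiv.ext
    intro i
    simp only [Equiv.Perm.mul_apply]
    by_cases hi : i < N
    · rw [hsinv i hi]
      by_cases hgi : (g : W Γ).right i < N
      · exact hs _ hgi
      · push_neg at hgi
        have : (g : W Γ).right i < N := fix_lt_of_fix_ge (fun j hj => (hg j hj).1) i hi
        omega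
    · push_neg at hi
      rw [(hg _ (hsinv_ge i hi)).1, (show ∀ (e : Equiv.Perm ℕ) (x : ℕ), e (e⁻¹ x) = x from fun e x => e.apply_symm_apply x), (hg i hi).1]

/-- Conjugations by permutations agreeing on `[0,N)` coincide for elements supported in `[0,N)`. -/
theorem conj_agree (u v : SInf) (g : WG Γ) (N : ℕ)
    (huv : ∀ i, i < N → u.1 i = v.1 i)
    (hg : ∀ i, N ≤ i → (g : W Γ).right i = i ∧ (g : W Γ).left i = 1) :
    permW u * g * (permW u)⁻¹ = permW v * g * (permW v)⁻¹ := by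
  have key : permW (v⁻¹ * u) * g * (permW (v⁻¹ * u))⁻¹ = g := by
    apply conj_fix _ _ N _ hg
    intro i hi
    show v.1⁻¹ (u.1 i) = i
    rw [huv i hi, (show ∀ (e : Equiv.Perm ℕ) (x : ℕ), e⁻¹ (e x) = x from fun e x => e.symm_apply_apply x)]
  rw [permW_mul, permW_inv] at key
  calc permW u * g * (permW u)⁻¹
      = permW v * ((permW v)⁻¹ * permW u * g * ((permW v)⁻¹ * permW u)⁻¹) * (permW v)⁻¹ := by
        group
    _ = permW v * g * (permW v)⁻¹ := by rw [key]

end GroupComb3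
def bswapFun (a b N i : ℕ) : ℕ :=
  if a ≤ i ∧ i < a + N then i - a + b else if b ≤ i ∧ i < b + N then i - b + a else i

theorem bswapFun_invol {a b N : ℕ} (h : a + N ≤ b) (i : ℕ) :
    bswapFun a b N (bswapFun a b N i) = i := by
  unfold bswapFun
  split_ifs <;> omega

def bswapPerm (a b N : ℕ) (h : a + N ≤ b) : Equiv.Perm ℕ :=
  ⟨bswapFun a b N, bswapFun a b N, bswapFun_invol h, bswapFun_invol h⟩

theorem bswapPerm_mem (a b N : ℕ) (h : a + N ≤ b) : bswapPerm a b N h ∈ SInf := by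
  rw [mem_SInf]
  refine Set.Finite.subset (Set.finite_Iio (b + N)) fun i hi => ?_
  simp only [Set.mem_setOf_eq] at hi
  simp only [Set.mem_Iio]
  by_contra hc
  push_neg at hc
  apply hi
  show bswapFun a b N i = i
  unfold bswapFun
  split_ifs <;> omega

def bswapW (a b N : ℕ) (h : a + N ≤ b) : SInf := ⟨bswapPerm a b N h, bswapPerm_mem a b N h⟩

theorem bswapW_apply (a b N : ℕ) (h : a + N ≤ b) (i : ℕ) :
    (bswapW a b N h).1 i = bswapFun a b N i := rfl

theorem bswapW_inv_apply (a b N : ℕ) (h : a + N ≤ b) (i : ℕ) :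
    (bswapW a b N h).1⁻¹ i = bswapFun a b N i := rfl
theorem N_le_mul (N n : ℕ) : N ≤ N * (n + 1) :=
  calc N = N * 1 := (mul_one N).symm
    _ ≤ N * (n + 1) := Nat.mul_le_mul_left N (by omega)

/-- The permutation swapping `[0,N)` with `[b,b+N)`. -/
def movP (N b : ℕ) (hb : N ≤ b) : SInf := bswapW 0 b N (by omega)

/-- The `n`-th conjugate `g_n` of `g`, with support moved into `[N(n+1), N(n+2))`. -/
def gseq {Γ : Type*} [Group Γ] (g : WG Γ) (N n : ℕ) : WG Γ :=
  permW (movP N (N * (n + 1)) (N_le_mul N n)) * g * (permW (movP N (N * (n + 1)) (N_le_mul N n)))⁻¹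

section GSeq
variable {Γ : Type*} [Group Γ]

theorem movP_inv_ge (N b : ℕ) (hb : N ≤ b) :
    ∀ i, (i < b ∨ b + N ≤ i) → N ≤ (movP N b hb).1⁻¹ i := by
  intro i hi
  show N ≤ bswapFun 0 b N i
  unfold bswapFun
  split_ifs <;> omega

/-- `g_n` is trivial outside `[N(n+1), N(n+1)+N)`. -/
theorem gseq_supp (g : WG Γ) (N : ℕ)
    (hg : ∀ i, N ≤ i → (g : W Γ).right i = i ∧ (g : W Γ).left i = 1) (n : ℕ) :
    ∀ i, (i < N * (n + 1) ∨ N * (n + 1) + N ≤ i) →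
      ((gseq g N n : W Γ).right i = i ∧ (gseq g N n : W Γ).left i = 1) := by
  intro i hi
  set s := movP N (N * (n + 1)) (N_le_mul N n) with hs
  have hge : N ≤ s.1⁻¹ i := movP_inv_ge _ _ _ i hi
  constructor
  · show ((permW s * g * (permW s)⁻¹ : WG Γ) : W Γ).right i = i
    rw [conjW_right]
    simp only [Equiv.Perm.mul_apply]
    rw [(hg _ hge).1, (show ∀ (e : Equiv.Perm ℕ) (x : ℕ), e (e⁻¹ x) = x from fun e x => e.apply_symm_apply x)]
  · show ((permW s * g * (permW s)⁻¹ : WG Γ) : W Γ).left i = 1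
    rw [conjW_left]
    exact (hg _ hge).2

theorem gseq_rel (g : WG Γ) (N : ℕ)
    (hg : ∀ i, N ≤ i → (g : W Γ).right i = i ∧ (g : W Γ).left i = 1)
    {n m : ℕ} (hnm : n < m) :
    permW (bswapW (N * (n + 1)) (N * (m + 1)) N
        (by calc N * (n+1) + N = N * (n+2) := by ring
              _ ≤ N * (m+1) := Nat.mul_le_mul_left N (by omega))) * gseq g N n *
      (permW (bswapW (N * (n + 1)) (N * (m + 1)) N
        (by calc N * (n+1) + N = N * (n+2) := by ring
              _ ≤ N * (m+1) := Nat.mul_le_mul_left N (by omega))))⁻¹ = gseq g N m := by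
  set hpf : N * (n+1) + N ≤ N * (m+1) :=
    (by calc N * (n+1) + N = N * (n+2) := by ring
          _ ≤ N * (m+1) := Nat.mul_le_mul_left N (by omega))
  set ρ := bswapW (N * (n + 1)) (N * (m + 1)) N hpf with hρ
  set sn := movP N (N * (n + 1)) (N_le_mul N n) with hsn
  set sm := movP N (N * (m + 1)) (N_le_mul N m) with hsm
  have key : permW (ρ * sn) * g * (permW (ρ * sn))⁻¹ = permW sm * g * (permW sm)⁻¹ := by
    apply conj_agree _ _ _ N _ hg
    intro i hi
    show ρ.1 (sn.1 i) = sm.1 i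
    have h1 : sn.1 i = i + N * (n + 1) := by
      show bswapFun 0 (N * (n+1)) N i = _
      have := N_le_mul N n
      unfold bswapFun
      split_ifs <;> omega
    have h2 : sm.1 i = i + N * (m + 1) := by
      show bswapFun 0 (N * (m+1)) N i = _
      have := N_le_mul N m
      unfold bswapFun
      split_ifs <;> omega
    rw [h1, h2]
    show bswapFun (N * (n+1)) (N * (m+1)) N (i + N * (n+1)) = i + N * (m+1)
    unfold bswapFun
    split_ifs <;> omega
  rw [permW_mul] at key
  show permW ρ * (permW sn * g * (permW sn)⁻¹) * (permW ρ)⁻¹ = permW sm * g * (permW sm)⁻¹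
  rw [← key]
  group

theorem exists_bound (x : WG Γ) :
    ∃ M, ∀ i, M ≤ i → ((x : W Γ).right i = i ∧ (x : W Γ).left i = 1) := by
  obtain ⟨h1, h2⟩ := x.2
  obtain ⟨M1, hM1⟩ := h1.bddAbove
  obtain ⟨M2, hM2⟩ := h2.bddAbove
  refine ⟨max M1 M2 + 1, fun i hi => ⟨?_, ?_⟩⟩
  · by_contra hc
    have := hM1 hc
    omega
  · by_contra hc
    have := hM2 hc
    omega

end GSeq
section Const
variable {Γ : Type*} [Group Γ]

theorem lt_N_mul {N : ℕ} (hN : 1 ≤ N) (n : ℕ) : n < N * (n + 1) :=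
  calc n < n + 1 := by omega
    _ = 1 * (n + 1) := (one_mul _).symm
    _ ≤ N * (n + 1) := Nat.mul_le_mul_right (n + 1) hN

theorem coeff_const (φ : WG Γ → ℂ) (hcentral : IsSCentral φ) (g : WG Γ) (N : ℕ) (hN : 1 ≤ N)
    (hg : ∀ i, N ≤ i → (g : W Γ).right i = i ∧ (g : W Γ).left i = 1) (q h : WG Γ) :
    ∃ n₀ L, ∀ n, n₀ ≤ n → φ (q * gseq g N n * h) = L := by
  obtain ⟨Mh, hMh⟩ := exists_bound h
  obtain ⟨Mq, hMq⟩ := exists_bound (q * h)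
  set n₀ := max Mh Mq with hn₀
  have step1 : ∀ n, n₀ ≤ n → q * gseq g N n * h = q * h * gseq g N n := by
    intro n hn
    have hcomm : gseq g N n * h = h * gseq g N n := by
      apply disj_comm _ _ Mh _ hMh
      intro i hi
      apply gseq_supp g N hg n
      left
      have := lt_N_mul hN n
      omega
    rw [mul_assoc, hcomm, ← mul_assoc]
  have step2 : ∀ n m, n₀ ≤ n → n < m → φ (q * h * gseq g N m) = φ (q * h * gseq g N n) := by
    intro n m hn hnm
    have hpf : N * (n+1) + N ≤ N * (m+1) :=
      (by calc N * (n+1) + N = N * (n+2) := by ring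
            _ ≤ N * (m+1) := Nat.mul_le_mul_left N (by omega))
    set ρ := bswapW (N * (n + 1)) (N * (m + 1)) N hpf with hρ
    have hfix : permW ρ * (q * h) * (permW ρ)⁻¹ = q * h := by
      apply conj_fix _ _ Mq _ hMq
      intro i hi
      show bswapFun (N * (n+1)) (N * (m+1)) N i = i
      have h1 : i < N * (n + 1) := by
        have := lt_N_mul hN n
        omega
      unfold bswapFun
      split_ifs <;> omega
    have hrel := gseq_rel g N hg hnm
    have := hcentral ρ (q * h * gseq g N n)
    calc φ (q * h * gseq g N m)
        = φ (permW ρ * (q * h * gseq g N n) * (permW ρ)⁻¹) := by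
          congr 1
          calc q * h * gseq g N m
              = (permW ρ * (q * h) * (permW ρ)⁻¹) * (permW ρ * gseq g N n * (permW ρ)⁻¹) := by
                rw [hfix, hrel]
            _ = permW ρ * (q * h * gseq g N n) * (permW ρ)⁻¹ := by group
      _ = φ (q * h * gseq g N n) := this
  refine ⟨n₀, φ (q * h * gseq g N n₀), fun n hn => ?_⟩
  rw [step1 n hn]
  rcases eq_or_lt_of_le hn with h1 | h1
  · rw [← h1]
  · exact step2 n₀ n le_rfl h1

end Const
section WOT
variable {H : Type*} [NormedAddCommGroup H] [InnerProductSpace ℂ H] [CompleteSpace H]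

theorem exists_wot_limit (A : ℕ → H →L[ℂ] H) (hA : ∀ n (x : H), ‖A n x‖ ≤ ‖x‖)
    (D : Submodule ℂ H) (hD : Dense (D : Set H))
    (hconv : ∀ x ∈ D, ∀ y ∈ D, ∃ L : ℂ, Tendsto (fun n => ⟪x, A n y⟫) atTop (𝓝 L)) :
    ∃ T : H →L[ℂ] H, (∀ (x : H), ‖T x‖ ≤ ‖x‖) ∧
      ∀ x y : H, Tendsto (fun n => ⟪x, A n y⟫) atTop (𝓝 ⟪x, T y⟫) := by
  -- basic bound on coefficients
  have hbnd : ∀ n (x y : H), ‖⟪x, A n y⟫‖ ≤ ‖x‖ * ‖y‖ := fun n x y =>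
    le_trans (norm_inner_le_norm _ _) (by
      have := hA n y
      have := norm_nonneg x
      nlinarith)
  -- approximation estimate
  have happrox : ∀ (n : ℕ) (x y x' y' : H), ‖⟪x, A n y⟫ - ⟪x', A n y'⟫‖ ≤
      ‖x - x'‖ * ‖y‖ + ‖x'‖ * ‖y - y'‖ := by
    intro n x y x' y'
    have h1 : ⟪x, A n y⟫ - ⟪x', A n y'⟫ = ⟪x - x', A n y⟫ + ⟪x', A n (y - y')⟫ := by
      rw [inner_sub_left, map_sub, inner_sub_right]
      ring
    rw [h1]
    exact le_trans (norm_add_le _ _) (add_le_add (hbnd n _ _) (hbnd n _ _))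
  -- convergence for all vectors
  have hconv_all : ∀ x y : H, ∃ L : ℂ, Tendsto (fun n => ⟪x, A n y⟫) atTop (𝓝 L) := by
    intro x y
    apply cauchySeq_tendsto_of_complete
    rw [Metric.cauchySeq_iff']
    intro ε hε
    set δ : ℝ := min 1 (ε / (4 * (‖x‖ + ‖y‖ + 2))) with hδdef
    have hδpos : 0 < δ := by
      apply lt_min one_pos
      apply div_pos hε
      have := norm_nonneg x
      have := norm_nonneg y
      nlinarith
    obtain ⟨x', hx'D, hx'⟩ := hD.exists_dist_lt x hδpos
    obtain ⟨y', hy'D, hy'⟩ := hD.exists_dist_lt y hδpos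
    rw [dist_eq_norm] at hx' hy'
    have hcross : ∀ n, ‖⟪x, A n y⟫ - ⟪x', A n y'⟫‖ ≤ ε / 4 := by
      intro n
      refine le_trans (happrox n x y x' y') ?_
      have hδ1 : δ ≤ 1 := min_le_left _ _
      have hx'norm : ‖x'‖ ≤ ‖x‖ + 1 := by
        have := norm_sub_norm_le x' x
        have h2 : ‖x' - x‖ < δ := by rwa [norm_sub_rev]
        linarith
      have hδ2 : δ ≤ ε / (4 * (‖x‖ + ‖y‖ + 2)) := min_le_right _ _
      have hxy : (0:ℝ) < ‖x‖ + ‖y‖ + 2 := by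
        have := norm_nonneg x; have := norm_nonneg y; linarith
      have key : δ * (‖x‖ + ‖y‖ + 2) ≤ ε / 4 := by
        have h4 : δ * (4 * (‖x‖ + ‖y‖ + 2)) ≤ ε := (le_div_iff₀ (by positivity)).mp hδ2
        nlinarith
      calc ‖x - x'‖ * ‖y‖ + ‖x'‖ * ‖y - y'‖
          ≤ δ * ‖y‖ + (‖x‖ + 1) * δ := by
            apply add_le_add
            · exact mul_le_mul_of_nonneg_right (le_of_lt hx') (norm_nonneg y)
            · calc ‖x'‖ * ‖y - y'‖ ≤ (‖x‖ + 1) * ‖y - y'‖ :=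
                    mul_le_mul_of_nonneg_right hx'norm (norm_nonneg _)
                _ ≤ (‖x‖ + 1) * δ := by
                    apply mul_le_mul_of_nonneg_left (le_of_lt hy')
                    have := norm_nonneg x; linarith
        _ ≤ δ * (‖x‖ + ‖y‖ + 2) := by nlinarith [norm_nonneg x, norm_nonneg y, hδpos.le]
        _ ≤ ε / 4 := key
    obtain ⟨L', hL'⟩ := hconv x' hx'D y' hy'D
    obtain ⟨N, hN⟩ := Metric.cauchySeq_iff'.mp hL'.cauchySeq (ε/4) (by linarith)
    refine ⟨N, fun n hn => ?_⟩
    have h1 := hcross n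
    have h2 := hcross N
    have h3 := hN n hn
    rw [dist_eq_norm] at h3 ⊢
    calc ‖⟪x, A n y⟫ - ⟪x, A N y⟫‖
        = ‖(⟪x, A n y⟫ - ⟪x', A n y'⟫) + (⟪x', A n y'⟫ - ⟪x', A N y'⟫)
            + (⟪x', A N y'⟫ - ⟪x, A N y⟫)‖ := by ring_nf
      _ ≤ ‖(⟪x, A n y⟫ - ⟪x', A n y'⟫) + (⟪x', A n y'⟫ - ⟪x', A N y'⟫)‖
            + ‖⟪x', A N y'⟫ - ⟪x, A N y⟫‖ := norm_add_le _ _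
      _ ≤ ‖⟪x, A n y⟫ - ⟪x', A n y'⟫‖ + ‖⟪x', A n y'⟫ - ⟪x', A N y'⟫‖
            + ‖⟪x', A N y'⟫ - ⟪x, A N y⟫‖ := by
            have := norm_add_le (⟪x, A n y⟫ - ⟪x', A n y'⟫) (⟪x', A n y'⟫ - ⟪x', A N y'⟫)
            linarith
      _ < ε := by
            rw [norm_sub_rev] at h2
            linarith
  -- the limit form
  set B : H → H → ℂ := fun x y => limUnder atTop (fun n => ⟪x, A n y⟫) with hBdef
  have hB : ∀ x y : H, Tendsto (fun n => ⟪x, A n y⟫) atTop (𝓝 (B x y)) := by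
    intro x y
    obtain ⟨L, hL⟩ := hconv_all x y
    have : B x y = L := hL.limUnder_eq
    rw [this]
    exact hL
  have hBbound : ∀ x y, ‖B x y‖ ≤ ‖x‖ * ‖y‖ := fun x y =>
    le_of_tendsto (hB x y).norm (Filter.Eventually.of_forall fun n => hbnd n x y)
  have hBaddl : ∀ x x' y : H, B (x + x') y = B x y + B x' y := by
    intro x x' y
    refine tendsto_nhds_unique (hB (x + x') y) ?_
    have := (hB x y).add (hB x' y)
    refine Tendsto.congr (fun n => ?_) this
    rw [inner_add_left]
  have hBsmull : ∀ (c : ℂ) (x y : H), B (c • x) y = (starRingEnd ℂ) c * B x y := by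
    intro c x y
    refine tendsto_nhds_unique (hB (c • x) y) ?_
    have := (hB x y).const_mul ((starRingEnd ℂ) c)
    refine Tendsto.congr (fun n => ?_) this
    rw [inner_smul_left]
  have hBaddr : ∀ x y y' : H, B x (y + y') = B x y + B x y' := by
    intro x y y'
    refine tendsto_nhds_unique (hB x (y + y')) ?_
    have := (hB x y).add (hB x y')
    refine Tendsto.congr (fun n => ?_) this
    rw [map_add, inner_add_right]
  have hBsmulr : ∀ (c : ℂ) (x y : H), B x (c • y) = c * B x y := by
    intro c x y
    refine tendsto_nhds_unique (hB x (c • y)) ?_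
    have := (hB x y).const_mul c
    refine Tendsto.congr (fun n => ?_) this
    rw [map_smul, inner_smul_right]
  -- the operator
  set T₀ : H → H := fun y =>
    (InnerProductSpace.toDual ℂ H).symm
      (LinearMap.mkContinuous
        { toFun := fun x => (starRingEnd ℂ) (B x y)
          map_add' := fun x x' => by
            show (starRingEnd ℂ) (B (x + x') y) =
              (starRingEnd ℂ) (B x y) + (starRingEnd ℂ) (B x' y)
            rw [hBaddl, map_add]
          map_smul' := fun c x => by
            show (starRingEnd ℂ) (B (c • x) y) = (RingHom.id ℂ) c • (starRingEnd ℂ) (B x y)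
            rw [hBsmull]
            simp [mul_comm] }
        ‖y‖ (fun x => by
          simp only [LinearMap.coe_mk, AddHom.coe_mk, RCLike.norm_conj]
          calc ‖B x y‖ ≤ ‖x‖ * ‖y‖ := hBbound x y
            _ = ‖y‖ * ‖x‖ := mul_comm _ _)) with hT₀def
  have hT₀ : ∀ x y : H, ⟪x, T₀ y⟫ = B x y := by
    intro x y
    have h1 : ⟪T₀ y, x⟫ = (starRingEnd ℂ) (B x y) := by
      have := InnerProductSpace.toDual_symm_apply (𝕜 := ℂ) (E := H)
        (x := x) (y := (LinearMap.mkContinuous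
        { toFun := fun x => (starRingEnd ℂ) (B x y)
          map_add' := fun x x' => by
            show (starRingEnd ℂ) (B (x + x') y) =
              (starRingEnd ℂ) (B x y) + (starRingEnd ℂ) (B x' y)
            rw [hBaddl, map_add]
          map_smul' := fun c x => by
            show (starRingEnd ℂ) (B (c • x) y) = (RingHom.id ℂ) c • (starRingEnd ℂ) (B x y)
            rw [hBsmull]
            simp [mul_comm] }
        ‖y‖ (fun x => by
          simp only [LinearMap.coe_mk, AddHom.coe_mk, RCLike.norm_conj]
          calc ‖B x y‖ ≤ ‖x‖ * ‖y‖ := hBbound x y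
            _ = ‖y‖ * ‖x‖ := mul_comm _ _)))
      exact this
    rw [← inner_conj_symm, h1, starRingEnd_self_apply]
  have hT₀add : ∀ y y' : H, T₀ (y + y') = T₀ y + T₀ y' := by
    intro y y'
    apply ext_inner_left ℂ
    intro v
    rw [hT₀, inner_add_right, hT₀, hT₀, hBaddr]
  have hT₀smul : ∀ (c : ℂ) (y : H), T₀ (c • y) = c • T₀ y := by
    intro c y
    apply ext_inner_left ℂ
    intro v
    rw [hT₀, inner_smul_right, hT₀, hBsmulr]
  have hT₀bound : ∀ y : H, ‖T₀ y‖ ≤ ‖y‖ := by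
    intro y
    by_cases h0 : ‖T₀ y‖ = 0
    · rw [h0]; exact norm_nonneg y
    · have hpos : 0 < ‖T₀ y‖ := lt_of_le_of_ne (norm_nonneg _) (Ne.symm h0)
      have h1 : ⟪T₀ y, T₀ y⟫ = B (T₀ y) y := hT₀ (T₀ y) y
      have h2 : ‖⟪T₀ y, (T₀ y : H)⟫‖ = ‖T₀ y‖ * ‖T₀ y‖ := by
        rw [inner_self_eq_norm_sq_to_K, norm_pow, RCLike.norm_ofReal,
          abs_of_nonneg (norm_nonneg _), sq]
      have h3 : ‖T₀ y‖ * ‖T₀ y‖ ≤ ‖T₀ y‖ * ‖y‖ := by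
        rw [← h2, h1]
        exact hBbound (T₀ y) y
      exact le_of_mul_le_mul_left h3 hpos
  refine ⟨LinearMap.mkContinuous
    { toFun := T₀, map_add' := hT₀add, map_smul' := hT₀smul } 1
    (fun y => by simpa using hT₀bound y), fun x => by simpa using hT₀bound x, ?_⟩
  intro x y
  have : ⟪x, (LinearMap.mkContinuous
    { toFun := T₀, map_add' := hT₀add, map_smul' := hT₀smul } 1
    (fun y => by simpa using hT₀bound y) : H →L[ℂ] H) y⟫ = B x y := hT₀ x y
  rw [this]
  exact hB x y

end WOT
section Main
variable {Γ : Type*} [Group Γ]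
variable {H : Type*} [NormedAddCommGroup H] [InnerProductSpace ℂ H] [CompleteSpace H]

theorem pi_mul_inv (π : WG Γ →* (H →L[ℂ] H)) (h : WG Γ) : π h * π h⁻¹ = 1 := by
  rw [← map_mul]; simp

theorem star_pi (π : WG Γ →* (H →L[ℂ] H)) (hu : ∀ g, π g ∈ unitary (H →L[ℂ] H))
    (h : WG Γ) : star (π h) = π h⁻¹ := by
  have h2 := (Unitary.mem_iff.mp (hu h)).1
  calc star (π h) = star (π h) * (π h * π h⁻¹) := by rw [pi_mul_inv, mul_one]
    _ = (star (π h) * π h) * π h⁻¹ := by rw [mul_assoc]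
    _ = π h⁻¹ := by rw [h2, one_mul]

theorem inner_pi_move (π : WG Γ →* (H →L[ℂ] H)) (hu : ∀ g, π g ∈ unitary (H →L[ℂ] H))
    (h : WG Γ) (x y : H) : ⟪π h x, y⟫ = ⟪x, π h⁻¹ y⟫ := by
  rw [← ContinuousLinearMap.adjoint_inner_right, ← ContinuousLinearMap.star_eq_adjoint,
    star_pi π hu]

theorem pi_isom (π : WG Γ →* (H →L[ℂ] H)) (hu : ∀ g, π g ∈ unitary (H →L[ℂ] H))
    (h : WG Γ) (x : H) : ‖π h x‖ = ‖x‖ := by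
  have h1 : ⟪π h x, π h x⟫ = ⟪x, x⟫ := by
    rw [inner_pi_move π hu]
    congr 1
    rw [← ContinuousLinearMap.mul_apply, ← map_mul]
    simp
  rw [inner_self_eq_norm_sq_to_K, inner_self_eq_norm_sq_to_K] at h1
  have h3 : (‖π h x‖:ℝ)^2 = ‖x‖^2 := by exact_mod_cast h1
  have h4 := norm_nonneg (π h x)
  have h5 := norm_nonneg x
  nlinarith [sq_nonneg (‖π h x‖ - ‖x‖), sq_nonneg (‖π h x‖ + ‖x‖)]

theorem repSet_subset_vN (π : WG Γ →* (H →L[ℂ] H)) : repSet π ⊆ vN π := by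
  intro x hx A hA
  exact (hA x hx).symm

end Main
theorem statement_0 {Γ : Type*} [Group Γ] {H : Type*} [NormedAddCommGroup H]
    [InnerProductSpace ℂ H] [CompleteSpace H]
    (φ : WG Γ → ℂ) (hstate : IsState φ) (hcentral : IsSCentral φ)
    (π : WG Γ →* (H →L[ℂ] H)) (ξ : H) (hGNS : IsGNS φ π ξ)
    (x₁ x₂ : ℕ → H)
    (hx₁ : Summable fun n => ‖x₁ n‖ ^ 2) (hx₂ : Summable fun n => ‖x₂ n‖ ^ 2)
    (φ₁ φ₂ : (H →L[ℂ] H) → ℂ)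
    (hφ₁ : ∀ a : H →L[ℂ] H, φ₁ a = ∑' n, ⟪x₁ n, a (x₁ n)⟫)
    (hφ₂ : ∀ a : H →L[ℂ] H, φ₂ a = ∑' n, ⟪x₂ n, a (x₂ n)⟫)
    (hi₁ : ∀ s : SInf, ∀ a ∈ vN π, φ₁ (π (permW s) * a) = φ₁ (a * π (permW s)))
    (hi₂ : ∀ s : SInf, ∀ a ∈ vN π, φ₂ (π (permW s) * a) = φ₂ (a * π (permW s)))
    (hii : ∀ c ∈ commutant (repSet π) ∩ vN π, φ₁ c = φ₂ c) :
    ∀ g : WG Γ, φ₁ (π g) = φ₂ (π g) := by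
  intro g
  have hu := hGNS.unitary
  -- a bound for the support of g
  obtain ⟨M₀, hM₀⟩ := exists_bound g
  set N := M₀ + 1 with hNdef
  have hN : 1 ≤ N := by omega
  have hg : ∀ i, N ≤ i → ((g : W Γ).right i = i ∧ (g : W Γ).left i = 1) :=
    fun i hi => hM₀ i (by omega)
  -- the sequence of conjugates
  set A : ℕ → H →L[ℂ] H := fun n => π (gseq g N n) with hAdef
  have hAle : ∀ n (x : H), ‖A n x‖ ≤ ‖x‖ := fun n x => le_of_eq (pi_isom π hu _ x)
  -- matrix coefficients against the cyclic vectors are eventually constant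
  have hgen : ∀ h' h : WG Γ, ∃ n₀ L, ∀ n, n₀ ≤ n → ⟪π h' ξ, A n (π h ξ)⟫ = L := by
    intro h' h
    obtain ⟨n₀, L, hL⟩ := coeff_const φ hcentral g N hN hg h'⁻¹ h
    refine ⟨n₀, L, fun n hn => ?_⟩
    rw [← hL n hn, inner_pi_move π hu, hGNS.inner_eq, map_mul, map_mul,
      ContinuousLinearMap.mul_apply, ContinuousLinearMap.mul_apply]
  -- hence eventually constant on the span
  set D := (Submodule.span ℂ (Set.range fun g : WG Γ => π g ξ)) with hDdef
  have hD : Dense (D : Set H) := hGNS.cyclic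
  set E : H → H → Prop := fun x y => ∃ n₀ L, ∀ n, n₀ ≤ n → ⟪x, A n y⟫ = L with hEdef
  have hE1 : ∀ (h' : WG Γ), ∀ y ∈ D, E (π h' ξ) y := by
    intro h' y hy
    induction hy using Submodule.span_induction with
    | mem z hz =>
        obtain ⟨h, rfl⟩ := hz
        exact hgen h' h
    | zero => exact ⟨0, 0, fun n _ => by simp⟩
    | add y₁ y₂ _ _ ih₁ ih₂ =>
        obtain ⟨n₁, L₁, hL₁⟩ := ih₁
        obtain ⟨n₂, L₂, hL₂⟩ := ih₂
        refine ⟨max n₁ n₂, L₁ + L₂, fun n hn => ?_⟩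
        rw [map_add, inner_add_right, hL₁ n (le_trans (le_max_left _ _) hn),
          hL₂ n (le_trans (le_max_right _ _) hn)]
    | smul c y' _ ih =>
        obtain ⟨n₁, L₁, hL₁⟩ := ih
        refine ⟨n₁, c * L₁, fun n hn => ?_⟩
        rw [map_smul, inner_smul_right, hL₁ n hn]
  have hE : ∀ x ∈ D, ∀ y ∈ D, E x y := by
    intro x hx y hy
    induction hx using Submodule.span_induction with
    | mem z hz =>
        obtain ⟨h', rfl⟩ := hz
        exact hE1 h' y hy
    | zero => exact ⟨0, 0, fun n _ => by simp⟩
    | add z₁ z₂ _ _ ih₁ ih₂ =>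
        obtain ⟨n₁, L₁, hL₁⟩ := ih₁
        obtain ⟨n₂, L₂, hL₂⟩ := ih₂
        refine ⟨max n₁ n₂, L₁ + L₂, fun n hn => ?_⟩
        rw [inner_add_left, hL₁ n (le_trans (le_max_left _ _) hn),
          hL₂ n (le_trans (le_max_right _ _) hn)]
    | smul c z _ ih =>
        obtain ⟨n₁, L₁, hL₁⟩ := ih
        refine ⟨n₁, (starRingEnd ℂ) c * L₁, fun n hn => ?_⟩
        rw [inner_smul_left, hL₁ n hn]
  have hconvD : ∀ x ∈ D, ∀ y ∈ D, ∃ L : ℂ, Tendsto (fun n => ⟪x, A n y⟫) atTop (𝓝 L) := by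
    intro x hx y hy
    obtain ⟨n₀, L, hL⟩ := hE x hx y hy
    refine ⟨L, Tendsto.congr' ?_ tendsto_const_nhds⟩
    rw [Filter.eventuallyEq_iff_exists_mem]
    exact ⟨Set.Ici n₀, Filter.Ici_mem_atTop n₀, fun n hn => (hL n hn).symm⟩
  -- the weak limit operator
  obtain ⟨T, hTle, hT⟩ := exists_wot_limit A hAle D hD hconvD
  -- eventual commutation with fixed group elements
  have hcomm : ∀ h : WG Γ, ∃ n₁, ∀ n, n₁ ≤ n → gseq g N n * h = h * gseq g N n := by
    intro h
    obtain ⟨Mh, hMh⟩ := exists_bound h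
    refine ⟨Mh, fun n hn => ?_⟩
    apply disj_comm _ _ Mh _ hMh
    intro i hi
    apply gseq_supp g N hg n
    left
    have := lt_N_mul hN n
    omega
  -- T is in the commutant of π(G)
  have hTcomm : T ∈ commutant (repSet π) := by
    rintro _ ⟨h, rfl⟩
    ext y
    apply ext_inner_left ℂ
    intro x
    show ⟪x, T (π h y)⟫ = ⟪x, π h (T y)⟫
    obtain ⟨n₁, hn₁⟩ := hcomm h
    have l1 := hT x (π h y)
    have l2 : Tendsto (fun n => ⟪x, A n (π h y)⟫) atTop (𝓝 ⟪x, π h (T y)⟫) := by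
      have e1 : ⟪π h⁻¹ x, T y⟫ = ⟪x, π h (T y)⟫ := by
        rw [inner_pi_move π hu, inv_inv]
      rw [← e1]
      refine Tendsto.congr' ?_ (hT (π h⁻¹ x) y)
      rw [Filter.eventuallyEq_iff_exists_mem]
      refine ⟨Set.Ici n₁, Filter.Ici_mem_atTop n₁, fun n hn => ?_⟩
      show ⟪π h⁻¹ x, A n y⟫ = ⟪x, A n (π h y)⟫
      rw [inner_pi_move π hu, inv_inv, ← ContinuousLinearMap.mul_apply (π h) (A n),
        ← map_mul, ← hn₁ n hn, map_mul, ContinuousLinearMap.mul_apply]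
    exact tendsto_nhds_unique l1 l2
  -- T is in the double commutant
  have hTvN : T ∈ vN π := by
    intro Bop hBop
    have hBA : ∀ n, Bop * A n = A n * Bop := fun n => hBop (A n) ⟨gseq g N n, rfl⟩
    ext y
    apply ext_inner_left ℂ
    intro x
    show ⟪x, T (Bop y)⟫ = ⟪x, Bop (T y)⟫
    have l1 := hT x (Bop y)
    have l2 : Tendsto (fun n => ⟪x, A n (Bop y)⟫) atTop (𝓝 ⟪x, Bop (T y)⟫) := by
      have e1 : ⟪ContinuousLinearMap.adjoint Bop x, T y⟫ = ⟪x, Bop (T y)⟫ :=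
        ContinuousLinearMap.adjoint_inner_left Bop (T y) x
      rw [← e1]
      refine Tendsto.congr (fun n => ?_) (hT (ContinuousLinearMap.adjoint Bop x) y)
      rw [ContinuousLinearMap.adjoint_inner_left Bop (A n y) x,
        ← ContinuousLinearMap.mul_apply Bop (A n), hBA n, ContinuousLinearMap.mul_apply]
    exact tendsto_nhds_unique l1 l2
  -- φ₁ and φ₂ agree on T
  have hTeq : φ₁ T = φ₂ T := hii T ⟨hTcomm, hTvN⟩
  -- φₖ is constant along the sequence
  have hrepvN : ∀ h : WG Γ, π h ∈ vN π := fun h => repSet_subset_vN π ⟨h, rfl⟩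
  have hinv : ∀ (ψ : (H →L[ℂ] H) → ℂ),
      (∀ s : SInf, ∀ a ∈ vN π, ψ (π (permW s) * a) = ψ (a * π (permW s))) →
      ∀ n, ψ (A n) = ψ (π g) := by
    intro ψ hψ n
    set s := movP N (N * (n + 1)) (N_le_mul N n) with hsdef
    have h1 := hψ s (π (g * (permW s)⁻¹)) (hrepvN _)
    rw [← map_mul, ← map_mul] at h1
    have e1 : permW s * (g * (permW s)⁻¹) = gseq g N n := by
      show _ = permW s * g * (permW s)⁻¹
      group
    have e2 : g * (permW s)⁻¹ * permW s = g := by group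
    rw [e1, e2] at h1
    exact h1
  -- φₖ(A n) tends to φₖ(T)
  have hbound : ∀ (x : ℕ → H) (n k : ℕ), ‖⟪x k, A n (x k)⟫‖ ≤ ‖x k‖ ^ 2 := by
    intro x n k
    calc ‖⟪x k, A n (x k)⟫‖ ≤ ‖x k‖ * ‖A n (x k)‖ := norm_inner_le_norm _ _
      _ ≤ ‖x k‖ * ‖x k‖ := by
          have := hAle n (x k)
          have := norm_nonneg (x k)
          nlinarith
      _ = ‖x k‖ ^ 2 := (sq (‖x k‖)).symm
  have hlim : ∀ (x : ℕ → H), Summable (fun k => ‖x k‖ ^ 2) →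
      Tendsto (fun n => ∑' k, ⟪x k, A n (x k)⟫) atTop (𝓝 (∑' k, ⟪x k, T (x k)⟫)) := by
    intro x hx
    exact tendsto_tsum_of_dominated_convergence hx (fun k => hT (x k) (x k))
      (Filter.Eventually.of_forall fun n => hbound x n)
  have key : ∀ (ψ : (H →L[ℂ] H) → ℂ) (x : ℕ → H), Summable (fun k => ‖x k‖ ^ 2) →
      (∀ a, ψ a = ∑' k, ⟪x k, a (x k)⟫) →
      (∀ s : SInf, ∀ a ∈ vN π, ψ (π (permW s) * a) = ψ (a * π (permW s))) →
      ψ (π g) = ψ T := by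
    intro ψ x hx hψa hψinv
    have t1 : Tendsto (fun n => ψ (A n)) atTop (𝓝 (ψ T)) := by
      have e : (fun n => ψ (A n)) = fun n => ∑' k, ⟪x k, A n (x k)⟫ :=
        funext fun n => hψa (A n)
      rw [e, hψa T]
      exact hlim x hx
    have t2 : Tendsto (fun n => ψ (A n)) atTop (𝓝 (ψ (π g))) := by
      have e : (fun n => ψ (A n)) = fun _ => ψ (π g) := funext fun n => hinv ψ hψinv n
      rw [e]
      exact tendsto_const_nhds
    exact tendsto_nhds_unique t2 t1
  rw [key φ₁ x₁ hx₁ hφ₁ hi₁, key φ₂ x₂ hx₂ hφ₂ hi₂, hTeq]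
end DN
end
end

section
/- Let K be a separable complex Hilbert space and let (a_n)_{n∈ℕ} be a bounded sequence of bounded linear operators on K that is a central sequence in B(K): for every bounded operator m on K and every x ∈ K, ‖(a_n·m − m·a_n)x‖ → 0 and ‖(a_n*·m − m·a_n*)x‖ → 0 as n → ∞. Then (a_n) is trivial: there exists a sequence (c_n) of complex numbers such that ‖(a_n − c_n·I)x‖ → 0 and ‖(a_n* − conj(c_n)·I)x‖ → 0 for every x ∈ K. -/
open scoped Classical ComplexOrder
open Filter Topology

noncomputable section

namespace DN

local notation "⟪" x ", " y "⟫" => @inner ℂ _ _ x y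

variable {Γ : Type*} [Group Γ]
variable {H : Type*} [NormedAddCommGroup H] [InnerProductSpace ℂ H] [CompleteSpace H]

theorem statement_5 {K : Type*} [NormedAddCommGroup K] [InnerProductSpace ℂ K]
    [CompleteSpace K] [TopologicalSpace.SeparableSpace K]
    (a : ℕ → (K →L[ℂ] K)) (hbdd : ∃ C : ℝ, ∀ n, ‖a n‖ ≤ C)
    (hcentral : ∀ (m : K →L[ℂ] K) (x : K),
      Tendsto (fun n => ‖(a n * m - m * a n) x‖) atTop (𝓝 0) ∧
      Tendsto (fun n =>
        ‖(ContinuousLinearMap.adjoint (a n) * m - m * ContinuousLinearMap.adjoint (a n)) x‖)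
        atTop (𝓝 0)) :
    ∃ c : ℕ → ℂ, ∀ x : K,
      Tendsto (fun n => ‖(a n - c n • (1 : K →L[ℂ] K)) x‖) atTop (𝓝 0) ∧
      Tendsto (fun n =>
        ‖(ContinuousLinearMap.adjoint (a n) - (starRingEnd ℂ) (c n) • (1 : K →L[ℂ] K)) x‖)
        atTop (𝓝 0) := by
  by_cases htriv : ∀ x : K, x = 0
  · refine ⟨fun _ => 0, fun x => ?_⟩
    have hx : x = 0 := htriv x
    subst hx
    simp only [map_zero, norm_zero]
    exact ⟨tendsto_const_nhds, tendsto_const_nhds⟩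
  · push_neg at htriv
    obtain ⟨y, hy⟩ := htriv
    set e : K := ‖y‖⁻¹ • y with he_def
    have he : ‖e‖ = 1 := by
      rw [he_def, norm_smul, norm_inv, norm_norm]
      field_simp [norm_ne_zero_iff.mpr hy]
    have hee : ⟪e, e⟫ = (1 : ℂ) := by
      rw [inner_self_eq_norm_sq_to_K, he]
      norm_num
    refine ⟨fun n => ⟪e, a n e⟫, fun x => ?_⟩
    set m : K →L[ℂ] K :=
      (ContinuousLinearMap.toSpanSingleton ℂ x).comp (innerSL ℂ e) with hm_def
    have hm : ∀ z : K, m z = ⟪e, z⟫ • x := fun z => rfl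
    obtain ⟨h1, h2⟩ := hcentral m e
    constructor
    · refine h1.congr fun n => ?_
      congr 1
      simp only [ContinuousLinearMap.sub_apply, ContinuousLinearMap.mul_apply,
        ContinuousLinearMap.smul_apply, ContinuousLinearMap.one_apply, hm, hee, one_smul,
        map_smul]
    · refine h2.congr fun n => ?_
      congr 1
      have hadj : ⟪e, ContinuousLinearMap.adjoint (a n) e⟫
          = (starRingEnd ℂ) ⟪e, a n e⟫ := by
        rw [ContinuousLinearMap.adjoint_inner_right, ← inner_conj_symm]
      simp only [ContinuousLinearMap.sub_apply, ContinuousLinearMap.mul_apply,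
        ContinuousLinearMap.smul_apply, ContinuousLinearMap.one_apply, hm, hee, one_smul,
        map_smul, hadj]

end DN
end
end
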